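/- arXiv:2602.16280 — 3 statements merged into one kernel-verified Lean document; each statement's English description precedes it below -/
import Mathlib

section
/- Let ρ be a two-rebit state (real symmetric positive semidefinite 4×4 matrix of trace 1) and set Π_TL(ρ) := ρ − (1/4)·trace(ρ * Y₄) • Y₄. Then Π_TL(ρ) is real-separable if and only if Π_TL(ρ) is positive semidefinite. In other words, a two-rebit state lacks tomographically-local entanglement exactly when its tomographically-local projection is a valid two-rebit state. -/
open Matrix Kronecker

/-- The real 2×2 matrix with rows (0, −1) and (1, 0). -/
noncomputable def y : Matrix (Fin 2) (Fin 2) ℝ := !![0, -1; 1, 0]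

/-- The real 4×4 matrix representing σ_y ⊗ σ_y. -/
noncomputable def Y₄ : Matrix (Fin 2 × Fin 2) (Fin 2 × Fin 2) ℝ := -(y ⊗ₖ y)

/-- A two-rebit state: a real symmetric positive semidefinite 4×4 matrix of trace 1. -/
def IsTwoRebitState (ρ : Matrix (Fin 2 × Fin 2) (Fin 2 × Fin 2) ℝ) : Prop :=
  ρ.IsSymm ∧ ρ.PosSemidef ∧ ρ.trace = 1

/-- Real separability: a convex combination of Kronecker products of real
symmetric positive semidefinite trace-one 2×2 matrices. -/
def RealSeparable (ρ : Matrix (Fin 2 × Fin 2) (Fin 2 × Fin 2) ℝ) : Prop :=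
  ∃ (n : ℕ) (p : Fin n → ℝ) (A B : Fin n → Matrix (Fin 2) (Fin 2) ℝ),
    (∀ k, 0 ≤ p k) ∧ ((∑ k, p k) = 1) ∧
    (∀ k, (A k).IsSymm ∧ (A k).PosSemidef ∧ (A k).trace = 1) ∧
    (∀ k, (B k).IsSymm ∧ (B k).PosSemidef ∧ (B k).trace = 1) ∧
    ρ = ∑ k, p k • (A k ⊗ₖ B k)

/-- The tomographically local projection Π_TL on two-rebit matrices. -/
noncomputable def PiTL (ρ : Matrix (Fin 2 × Fin 2) (Fin 2 × Fin 2) ℝ) :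
    Matrix (Fin 2 × Fin 2) (Fin 2 × Fin 2) ℝ :=
  ρ - ((1 / 4 : ℝ) * (ρ * Y₄).trace) • Y₄


/-! ### Small helper lemmas -/

lemma posSemidef_smul {n : Type*} [Fintype n] {c : ℝ} (hc : 0 ≤ c)
    {M : Matrix n n ℝ} (hM : M.PosSemidef) : (c • M).PosSemidef := by
  refine Matrix.PosSemidef.of_dotProduct_mulVec_nonneg ?_ fun x => ?_
  · unfold Matrix.IsHermitian
    rw [conjTranspose_smul, hM.1.eq]
    simp
  · rw [smul_mulVec, dotProduct_smul, smul_eq_mul]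
    exact mul_nonneg hc (hM.dotProduct_mulVec_nonneg x)

open scoped MatrixOrder Matrix.Norms.L2Operator in
lemma Matrix.posSemidef_iff_eq_transpose_mul_self {n : Type*} [Fintype n] [DecidableEq n]
    {A : Matrix n n ℝ} : A.PosSemidef ↔ ∃ B : Matrix n n ℝ, A = Bᴴ * B := by
  refine ⟨fun h => ?_, ?_⟩
  · obtain ⟨B, hB⟩ := CStarAlgebra.nonneg_iff_eq_star_mul_self.mp h.nonneg
    exact ⟨B, hB⟩
  · rintro ⟨B, rfl⟩
    exact posSemidef_conjTranspose_mul_self B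

lemma posSemidef_kron {m n : Type*} [Fintype m] [Fintype n] [DecidableEq m] [DecidableEq n]
    {A : Matrix m m ℝ} {B : Matrix n n ℝ}
    (hA : A.PosSemidef) (hB : B.PosSemidef) : (A ⊗ₖ B).PosSemidef := by
  obtain ⟨C, hC⟩ := Matrix.posSemidef_iff_eq_transpose_mul_self.mp hA
  obtain ⟨D, hD⟩ := Matrix.posSemidef_iff_eq_transpose_mul_self.mp hB
  have key : A ⊗ₖ B = (C ⊗ₖ D)ᴴ * (C ⊗ₖ D) := by
    rw [hC, hD, Matrix.mul_kronecker_mul]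
    congr 1
  rw [key]
  exact Matrix.posSemidef_conjTranspose_mul_self _

lemma posSemidef_sum {n ι : Type*} [Fintype n] [Fintype ι] (f : ι → Matrix n n ℝ)
    (h : ∀ i, (f i).PosSemidef) : (∑ i, f i).PosSemidef := by
  classical
  exact Finset.sum_induction f _ (fun a b ha hb => ha.add hb) Matrix.PosSemidef.zero
    (fun i _ => h i)

lemma quad_expand {κ : Type*} [Fintype κ] (Y : Matrix κ κ ℝ) (a b : κ → ℝ) (c s : ℝ) :
    (c • a + s • b) ⬝ᵥ Y *ᵥ (c • a + s • b)
      = c^2 * (a ⬝ᵥ Y *ᵥ a) + c*s*(a ⬝ᵥ Y *ᵥ b) + c*s*(b ⬝ᵥ Y *ᵥ a) + s^2 * (b ⬝ᵥ Y *ᵥ b) := by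
  rw [mulVec_add, mulVec_smul, mulVec_smul, add_dotProduct, smul_dotProduct, smul_dotProduct,
    dotProduct_add, dotProduct_add, dotProduct_smul, dotProduct_smul, dotProduct_smul,
    dotProduct_smul]
  simp only [smul_eq_mul]
  ring

lemma dot_symm {κ : Type*} [Fintype κ] {Y : Matrix κ κ ℝ} (hY : Y.IsSymm) (a b : κ → ℝ) :
    a ⬝ᵥ Y *ᵥ b = b ⬝ᵥ Y *ᵥ a := by
  simp only [dotProduct, mulVec, Finset.mul_sum]
  rw [Finset.sum_comm]
  refine Finset.sum_congr rfl fun i _ => Finset.sum_congr rfl fun j _ => ?_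
  rw [hY.apply i j]
  ring

lemma trace_vecMulVec_mul {κ : Type*} [Fintype κ] (Y : Matrix κ κ ℝ)
    (a : κ → ℝ) : (vecMulVec a a * Y).trace = a ⬝ᵥ Y *ᵥ a := by
  simp only [Matrix.trace, Matrix.diag_apply, Matrix.mul_apply, vecMulVec_apply, dotProduct,
    mulVec, Finset.mul_sum]
  rw [Finset.sum_comm]
  refine Finset.sum_congr rfl fun i _ => Finset.sum_congr rfl fun j _ => ?_
  ring

lemma trace_vecMulVec {κ : Type*} [Fintype κ] (a : κ → ℝ) :
    (vecMulVec a a).trace = a ⬝ᵥ a := by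
  simp [Matrix.trace, vecMulVec_apply, dotProduct]

lemma vecMulVec_psd {κ : Type*} [Fintype κ] (a : κ → ℝ) : (vecMulVec a a).PosSemidef := by
  refine Matrix.PosSemidef.of_dotProduct_mulVec_nonneg ?_ fun x => ?_
  · unfold Matrix.IsHermitian
    ext i j
    simp [vecMulVec_apply, mul_comm]
  · have : (star x) ⬝ᵥ (vecMulVec a a *ᵥ x) = (a ⬝ᵥ x) * (a ⬝ᵥ x) := by
      simp only [star_trivial, dotProduct, mulVec, vecMulVec_apply, Finset.mul_sum]
      rw [Finset.sum_comm]
      refine Finset.sum_congr rfl fun i _ => ?_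
      rw [Finset.sum_mul]
      refine Finset.sum_congr rfl fun k _ => ?_
      ring
    rw [this]
    exact mul_self_nonneg _

section Rot
variable {κ : Type*} [Fintype κ]

lemma sum_q_pair {Y : Matrix κ κ ℝ} (hY : Y.IsSymm) (a b : κ → ℝ) (θ : ℝ) :
    ((Real.cos θ • a + Real.sin θ • b) ⬝ᵥ Y *ᵥ (Real.cos θ • a + Real.sin θ • b))
    + ((-Real.sin θ • a + Real.cos θ • b) ⬝ᵥ Y *ᵥ (-Real.sin θ • a + Real.cos θ • b))
    = (a ⬝ᵥ Y *ᵥ a) + (b ⬝ᵥ Y *ᵥ b) := by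
  rw [quad_expand, quad_expand]
  have h := Real.sin_sq_add_cos_sq θ
  linear_combination ((a ⬝ᵥ Y *ᵥ a) + (b ⬝ᵥ Y *ᵥ b)) * h

lemma vecMulVec_pair (a b : κ → ℝ) (θ : ℝ) :
    vecMulVec (Real.cos θ • a + Real.sin θ • b) (Real.cos θ • a + Real.sin θ • b)
    + vecMulVec (-Real.sin θ • a + Real.cos θ • b) (-Real.sin θ • a + Real.cos θ • b)
    = vecMulVec a a + vecMulVec b b := by
  ext i j
  have h := Real.sin_sq_add_cos_sq θ
  simp only [Matrix.add_apply, vecMulVec_apply, Pi.add_apply, Pi.smul_apply, smul_eq_mul,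
    Pi.neg_apply, neg_mul]
  ring_nf
  linear_combination (a i * a j + b i * b j) * h

/-- If the quadratic form values at `a` and `b` have opposite signs, some rotation of the
pair kills the first one. -/
lemma exists_theta {Y : Matrix κ κ ℝ} (hY : Y.IsSymm) (a b : κ → ℝ)
    (h : (a ⬝ᵥ Y *ᵥ a) * (b ⬝ᵥ Y *ᵥ b) < 0) :
    ∃ θ : ℝ, ((Real.cos θ • a + Real.sin θ • b) ⬝ᵥ Y *ᵥ (Real.cos θ • a + Real.sin θ • b)) = 0 := by
  set qa := a ⬝ᵥ Y *ᵥ a with hqa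
  set qb := b ⬝ᵥ Y *ᵥ b with hqb
  set qab := a ⬝ᵥ Y *ᵥ b with hqab
  have hval : ∀ θ : ℝ, ((Real.cos θ • a + Real.sin θ • b) ⬝ᵥ Y *ᵥ (Real.cos θ • a + Real.sin θ • b))
      = Real.cos θ ^ 2 * qa + 2 * (Real.cos θ * Real.sin θ) * qab + Real.sin θ ^ 2 * qb := by
    intro θ
    rw [quad_expand]
    rw [dot_symm hY b a, ← hqab]
    ring
  set g : ℝ → ℝ := fun θ => Real.cos θ ^ 2 * qa + 2 * (Real.cos θ * Real.sin θ) * qab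
      + Real.sin θ ^ 2 * qb with hg
  have hcont : Continuous g := by fun_prop
  have hg0 : g 0 = qa := by simp [hg]
  have hg1 : g (Real.pi / 2) = qb := by simp [hg]
  have hle : (0:ℝ) ≤ Real.pi / 2 := by positivity
  have : ∃ θ ∈ Set.Icc 0 (Real.pi/2), g θ = 0 := by
    rcases lt_or_ge qa 0 with hqa0 | hqa0
    · have hqb0 : 0 < qb := by nlinarith
      have := intermediate_value_Icc hle hcont.continuousOn
      have h0 : (0:ℝ) ∈ Set.Icc (g 0) (g (Real.pi/2)) := by
        rw [hg0, hg1]; exact ⟨le_of_lt hqa0, le_of_lt hqb0⟩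
      obtain ⟨θ, hθ, hθ0⟩ := this h0
      exact ⟨θ, hθ, hθ0⟩
    · have hqa0' : 0 < qa := by
        rcases lt_or_eq_of_le hqa0 with h' | h'
        · exact h'
        · rw [← h', zero_mul] at h
          exact absurd h (lt_irrefl 0)
      have hqb0 : qb < 0 := by nlinarith
      have := intermediate_value_Icc' hle hcont.continuousOn
      have h0 : (0:ℝ) ∈ Set.Icc (g (Real.pi/2)) (g 0) := by
        rw [hg0, hg1]; exact ⟨le_of_lt hqb0, le_of_lt hqa0'⟩
      obtain ⟨θ, hθ, hθ0⟩ := this h0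
      exact ⟨θ, hθ, hθ0⟩
  obtain ⟨θ, _, hθ0⟩ := this
  exact ⟨θ, by rw [hval]; exact hθ0⟩

end Rot

lemma comp_update {ι : Type*} {α M : Sort*} [DecidableEq ι] (F : α → M) (g : ι → α)
    (i : ι) (a : α) :
    (fun m => F (Function.update g i a m)) = Function.update (fun m => F (g m)) i (F a) := by
  funext m
  by_cases h : m = i <;> simp [Function.update_apply, h]

lemma sum_update_two {ι M : Type*} [Fintype ι] [DecidableEq ι] [AddCommMonoid M]
    (g : ι → M) {i j : ι} (hij : i ≠ j) (ai aj : M) (h : ai + aj = g i + g j) :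
    ∑ m, Function.update (Function.update g i ai) j aj m = ∑ m, g m := by
  rw [Finset.sum_update_of_mem (Finset.mem_univ j)]
  have hi : i ∈ Finset.univ \ {j} := by simp [hij]
  rw [Finset.sum_update_of_mem hi]
  rw [Finset.sum_eq_add_sum_sdiff_singleton_of_mem (Finset.mem_univ j) g]
  rw [Finset.sum_eq_add_sum_sdiff_singleton_of_mem hi g]
  rw [← add_assoc, ← add_assoc, add_comm aj ai, h, add_comm (g i) (g j)]

lemma rotate_aux {κ : Type*} [Fintype κ] {Y : Matrix κ κ ℝ} (hY : Y.IsSymm) :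
    ∀ (n : ℕ) {ι : Type*} [Fintype ι] [DecidableEq ι] (v : ι → κ → ℝ),
    (Finset.univ.filter (fun m => v m ⬝ᵥ Y *ᵥ v m ≠ 0)).card ≤ n →
    (∑ m, v m ⬝ᵥ Y *ᵥ v m) = 0 →
    ∃ w : ι → κ → ℝ, (∀ m, w m ⬝ᵥ Y *ᵥ w m = 0) ∧
      (∑ m, vecMulVec (w m) (w m)) = ∑ m, vecMulVec (v m) (v m) := by
  intro n
  induction n with
  | zero =>
    intro ι _ _ v hc _
    refine ⟨v, fun m => ?_, rfl⟩
    by_contra h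
    have : m ∈ Finset.univ.filter (fun m => v m ⬝ᵥ Y *ᵥ v m ≠ 0) := by
      simp [h]
    have := Finset.card_pos.mpr ⟨m, this⟩
    omega
  | succ n ih =>
    intro ι _ _ v hc hsum
    by_cases hall : ∀ m, v m ⬝ᵥ Y *ᵥ v m = 0
    · exact ⟨v, hall, rfl⟩
    push_neg at hall
    obtain ⟨i, hi⟩ := hall
    have hex : ∃ j, (v i ⬝ᵥ Y *ᵥ v i) * (v j ⬝ᵥ Y *ᵥ v j) < 0 := by
      by_contra hno
      push_neg at hno
      have hsum' : ∑ j, (v i ⬝ᵥ Y *ᵥ v i) * (v j ⬝ᵥ Y *ᵥ v j) = 0 := by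
        rw [← Finset.mul_sum, hsum, mul_zero]
      have hz := (Finset.sum_eq_zero_iff_of_nonneg (fun j _ => hno j)).mp hsum' i
        (Finset.mem_univ i)
      exact hi (by nlinarith)
    obtain ⟨j, hij⟩ := hex
    have hqj : v j ⬝ᵥ Y *ᵥ v j ≠ 0 := by
      intro h0
      rw [h0, mul_zero] at hij
      exact lt_irrefl 0 hij
    have hne : i ≠ j := by
      intro e
      rw [← e] at hij
      nlinarith [mul_self_nonneg (v i ⬝ᵥ Y *ᵥ v i)]
    obtain ⟨θ, hθ⟩ := exists_theta hY (v i) (v j) hij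
    set ai : κ → ℝ := Real.cos θ • v i + Real.sin θ • v j with hai
    set aj : κ → ℝ := -Real.sin θ • v i + Real.cos θ • v j with haj
    set wv : ι → κ → ℝ := Function.update (Function.update v i ai) j aj with hwv
    have hwvi : wv i = ai := by
      rw [hwv]
      rw [Function.update_of_ne hne, Function.update_self]
    have hwvj : wv j = aj := by
      rw [hwv, Function.update_self]
    have hwvm : ∀ m, m ≠ i → m ≠ j → wv m = v m := by
      intro m hmi hmj
      rw [hwv, Function.update_of_ne hmj, Function.update_of_ne hmi]
    -- the sum of quadratic values is preserved
    have hqpair : (ai ⬝ᵥ Y *ᵥ ai) + (aj ⬝ᵥ Y *ᵥ aj) = (v i ⬝ᵥ Y *ᵥ v i) + (v j ⬝ᵥ Y *ᵥ v j) :=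
      sum_q_pair hY (v i) (v j) θ
    have hsum2 : (∑ m, wv m ⬝ᵥ Y *ᵥ wv m) = 0 := by
      have : (fun m => wv m ⬝ᵥ Y *ᵥ wv m)
          = Function.update (Function.update (fun m => v m ⬝ᵥ Y *ᵥ v m) i (ai ⬝ᵥ Y *ᵥ ai)) j
              (aj ⬝ᵥ Y *ᵥ aj) := by
        rw [hwv, comp_update (fun u => u ⬝ᵥ Y *ᵥ u) _ j aj,
          comp_update (fun u => u ⬝ᵥ Y *ᵥ u) v i ai]
      calc (∑ m, wv m ⬝ᵥ Y *ᵥ wv m)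
          = ∑ m, Function.update (Function.update (fun m => v m ⬝ᵥ Y *ᵥ v m) i
              (ai ⬝ᵥ Y *ᵥ ai)) j (aj ⬝ᵥ Y *ᵥ aj) m := by rw [← this]
        _ = ∑ m, v m ⬝ᵥ Y *ᵥ v m := sum_update_two _ hne _ _ hqpair
        _ = 0 := hsum
    have hvv : (∑ m, vecMulVec (wv m) (wv m)) = ∑ m, vecMulVec (v m) (v m) := by
      have : (fun m => vecMulVec (wv m) (wv m))
          = Function.update (Function.update (fun m => vecMulVec (v m) (v m)) i
              (vecMulVec ai ai)) j (vecMulVec aj aj) := by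
        rw [hwv, comp_update (fun u => vecMulVec u u) _ j aj,
          comp_update (fun u => vecMulVec u u) v i ai]
      calc (∑ m, vecMulVec (wv m) (wv m))
          = ∑ m, Function.update (Function.update (fun m => vecMulVec (v m) (v m)) i
              (vecMulVec ai ai)) j (vecMulVec aj aj) m := by rw [← this]
        _ = ∑ m, vecMulVec (v m) (v m) :=
            sum_update_two _ hne _ _ (vecMulVec_pair (v i) (v j) θ)
    have hcard : (Finset.univ.filter (fun m => wv m ⬝ᵥ Y *ᵥ wv m ≠ 0)).card ≤ n := by
      have hsub : Finset.univ.filter (fun m => wv m ⬝ᵥ Y *ᵥ wv m ≠ 0)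
          ⊆ (Finset.univ.filter (fun m => v m ⬝ᵥ Y *ᵥ v m ≠ 0)).erase i := by
        intro m hm
        simp only [Finset.mem_filter, Finset.mem_univ, true_and] at hm
        rw [Finset.mem_erase]
        constructor
        · intro e
          rw [e, hwvi] at hm
          exact hm hθ
        · simp only [Finset.mem_filter, Finset.mem_univ, true_and]
          by_cases hmi : m = i
          · exfalso
            rw [hmi, hwvi] at hm
            exact hm hθ
          · by_cases hmj : m = j
            · rw [hmj]; exact hqj
            · rw [hwvm m hmi hmj] at hm
              exact hm
      have hmemi : i ∈ Finset.univ.filter (fun m => v m ⬝ᵥ Y *ᵥ v m ≠ 0) := by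
        simp [hi]
      have h1 := Finset.card_le_card hsub
      rw [Finset.card_erase_of_mem hmemi] at h1
      omega
    obtain ⟨w, hw1, hw2⟩ := ih wv hcard hsum2
    exact ⟨w, hw1, hw2.trans hvv⟩

lemma Y4_symm : Y₄.IsSymm := by
  unfold Matrix.IsSymm
  ext ⟨i, j⟩ ⟨k, l⟩
  fin_cases i <;> fin_cases j <;> fin_cases k <;> fin_cases l <;>
    simp [Y₄, y, Matrix.transpose_apply, kroneckerMap_apply]

lemma q_formula (v : Fin 2 × Fin 2 → ℝ) :
    v ⬝ᵥ Y₄ *ᵥ v = -2 * (v (0,0) * v (1,1) - v (0,1) * v (1,0)) := by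
  simp [dotProduct, Matrix.mulVec, Y₄, y, Fintype.sum_prod_type, Fin.sum_univ_two,
    kroneckerMap_apply]
  ring

lemma trace_Y4 : Y₄.trace = 0 := by
  simp [Matrix.trace, Y₄, y, Fintype.sum_prod_type, Fin.sum_univ_two, kroneckerMap_apply]

lemma trace_Y4_sq : (Y₄ * Y₄).trace = 4 := by
  simp [Matrix.trace, Matrix.mul_apply, Y₄, y, Fintype.sum_prod_type, Fin.sum_univ_two,
    kroneckerMap_apply]
  norm_num

lemma factor_of_q_zero (v : Fin 2 × Fin 2 → ℝ) (h : v ⬝ᵥ Y₄ *ᵥ v = 0) :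
    ∃ a b : Fin 2 → ℝ, ∀ p : Fin 2 × Fin 2, v p = a p.1 * b p.2 := by
  have hdet : v (0,0) * v (1,1) = v (0,1) * v (1,0) := by
    rw [q_formula] at h
    linarith
  by_cases hv : v = 0
  · exact ⟨0, 0, fun p => by simp [hv]⟩
  · have : ∃ p, v p ≠ 0 := by
      by_contra hno
      push_neg at hno
      exact hv (funext hno)
    obtain ⟨⟨i, j⟩, hp⟩ := this
    refine ⟨fun k => v (k, j), fun l => v (i, l) / v (i, j), fun ⟨k, l⟩ => ?_⟩
    have key : v (k, l) * v (i, j) = v (k, j) * v (i, l) := by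
      fin_cases i <;> fin_cases j <;> fin_cases k <;> fin_cases l <;>
        simp only [Fin.mk_zero, Fin.mk_one] <;>
        first
          | ring1
          | linear_combination hdet
          | linear_combination -hdet
    field_simp
    linarith [key]

/-- The canonical 2×2 trace-one PSD symmetric state attached to a vector. -/
noncomputable def stateOf (a : Fin 2 → ℝ) : Matrix (Fin 2) (Fin 2) ℝ :=
  if a = 0 then !![1,0;0,0] else ((a ⬝ᵥ a)⁻¹) • vecMulVec a a

lemma dot_self_pos {a : Fin 2 → ℝ} (h : a ≠ 0) : 0 < a ⬝ᵥ a := by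
  rcases lt_or_eq_of_le (Finset.sum_nonneg fun i _ => mul_self_nonneg (a i)) with h' | h'
  · exact h'
  · exact absurd (dotProduct_self_eq_zero.mp h'.symm) h

lemma stateOf_props (a : Fin 2 → ℝ) :
    (stateOf a).IsSymm ∧ (stateOf a).PosSemidef ∧ (stateOf a).trace = 1 := by
  unfold stateOf
  by_cases h : a = 0
  · rw [if_pos h]
    refine ⟨?_, Matrix.PosSemidef.of_dotProduct_mulVec_nonneg ?_ fun x => ?_, ?_⟩
    · unfold Matrix.IsSymm
      ext i j
      fin_cases i <;> fin_cases j <;> simp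
    · unfold Matrix.IsHermitian
      ext i j
      fin_cases i <;> fin_cases j <;> simp
    · have hx : star x ⬝ᵥ (!![1,0;0,0] : Matrix (Fin 2) (Fin 2) ℝ) *ᵥ x = x 0 * x 0 := by
        simp [dotProduct, Matrix.mulVec, Fin.sum_univ_two]
      rw [hx]
      exact mul_self_nonneg _
    · simp [Matrix.trace, Fin.sum_univ_two]
  · rw [if_neg h]
    have hna := dot_self_pos h
    refine ⟨?_, posSemidef_smul (by positivity) (vecMulVec_psd a), ?_⟩
    · unfold Matrix.IsSymm
      ext i j
      simp only [Matrix.transpose_apply, Matrix.smul_apply, vecMulVec_apply, smul_eq_mul]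
      ring
    · rw [Matrix.trace_smul, _root_.trace_vecMulVec, smul_eq_mul, inv_mul_cancel₀ (ne_of_gt hna)]

lemma key_eq (wv : Fin 2 × Fin 2 → ℝ) (a b : Fin 2 → ℝ)
    (hab : ∀ p : Fin 2 × Fin 2, wv p = a p.1 * b p.2) :
    (wv ⬝ᵥ wv) • (stateOf a ⊗ₖ stateOf b) = vecMulVec wv wv := by
  by_cases ha : a = 0
  · have hw : wv = 0 := funext fun p => by rw [hab p, ha]; simp
    rw [hw]
    ext p q
    simp [vecMulVec_apply]
  by_cases hb : b = 0
  · have hw : wv = 0 := funext fun p => by rw [hab p, hb]; simp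
    rw [hw]
    ext p q
    simp [vecMulVec_apply]
  have hna := dot_self_pos ha
  have hnb := dot_self_pos hb
  have hwdot : wv ⬝ᵥ wv = (a ⬝ᵥ a) * (b ⬝ᵥ b) := by
    simp only [dotProduct]
    rw [Finset.sum_mul_sum, Fintype.sum_prod_type]
    refine Finset.sum_congr rfl fun k _ => Finset.sum_congr rfl fun l _ => ?_
    rw [hab (k, l)]
    ring
  unfold stateOf
  rw [if_neg ha, if_neg hb, smul_kronecker, kronecker_smul, smul_smul, smul_smul, hwdot]
  have hsc : (a ⬝ᵥ a) * (b ⬝ᵥ b) * (a ⬝ᵥ a)⁻¹ * (b ⬝ᵥ b)⁻¹ = 1 := by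
    rw [show (a ⬝ᵥ a) * (b ⬝ᵥ b) * (a ⬝ᵥ a)⁻¹ * (b ⬝ᵥ b)⁻¹
        = ((a ⬝ᵥ a) * (a ⬝ᵥ a)⁻¹) * ((b ⬝ᵥ b) * (b ⬝ᵥ b)⁻¹) from by ring,
      mul_inv_cancel₀ hna.ne', mul_inv_cancel₀ hnb.ne', one_mul]
  rw [hsc, one_smul]
  ext p q
  simp only [kroneckerMap_apply, vecMulVec_apply]
  rw [hab p, hab q]
  ring

lemma hard_direction (σ : Matrix (Fin 2 × Fin 2) (Fin 2 × Fin 2) ℝ) (hpsd : σ.PosSemidef)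
    (htr : σ.trace = 1) (hY0 : (σ * Y₄).trace = 0) : RealSeparable σ := by
  classical
  obtain ⟨C, hC⟩ := Matrix.posSemidef_iff_eq_transpose_mul_self.mp hpsd
  set v : (Fin 2 × Fin 2) → (Fin 2 × Fin 2) → ℝ := fun m p => C m p with hv
  have hσ : σ = ∑ m, vecMulVec (v m) (v m) := by
    rw [hC]
    ext p q
    simp [Matrix.mul_apply, Matrix.sum_apply, vecMulVec_apply, Matrix.conjTranspose_apply, hv]
  have hqsum : (∑ m, v m ⬝ᵥ Y₄ *ᵥ v m) = 0 := by
    have h2 : (σ * Y₄).trace = ∑ m, v m ⬝ᵥ Y₄ *ᵥ v m := by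
      rw [hσ, Finset.sum_mul, Matrix.trace_sum]
      exact Finset.sum_congr rfl fun m _ => trace_vecMulVec_mul Y₄ (v m)
    rw [← h2, hY0]
  obtain ⟨w, hw0, hwsum⟩ := rotate_aux Y4_symm
    (Finset.univ.filter (fun m => v m ⬝ᵥ Y₄ *ᵥ v m ≠ 0)).card v le_rfl hqsum
  have hσw : σ = ∑ m, vecMulVec (w m) (w m) := by rw [hσ, ← hwsum]
  choose a b hab using fun m => factor_of_q_zero (w m) (hw0 m)
  set p : (Fin 2 × Fin 2) → ℝ := fun m => (w m) ⬝ᵥ (w m) with hp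
  have hpnn : ∀ m, 0 ≤ p m := fun m => Finset.sum_nonneg fun i _ => mul_self_nonneg _
  have hpsum : (∑ m, p m) = 1 := by
    rw [← htr, hσw, Matrix.trace_sum]
    exact Finset.sum_congr rfl fun m _ => (_root_.trace_vecMulVec (w m)).symm
  have hterm : ∀ m, p m • (stateOf (a m) ⊗ₖ stateOf (b m)) = vecMulVec (w m) (w m) :=
    fun m => key_eq (w m) (a m) (b m) (hab m)
  set e : Fin 4 ≃ Fin 2 × Fin 2 := (finCongr (by norm_num : 4 = 2*2)).trans finProdFinEquiv.symm
    with he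
  refine ⟨4, fun k => p (e k), fun k => stateOf (a (e k)), fun k => stateOf (b (e k)),
    fun k => hpnn (e k), ?_, fun k => stateOf_props (a (e k)), fun k => stateOf_props (b (e k)),
    ?_⟩
  · rw [Equiv.sum_comp e p, hpsum]
  · rw [Equiv.sum_comp e (fun m => p m • (stateOf (a m) ⊗ₖ stateOf (b m))), hσw]
    exact Finset.sum_congr rfl fun m _ => (hterm m).symm


/-- **Proposition 7, item 1 of the paper.**
A two-rebit state lacks tomographically-local entanglement (i.e. its
tomographically-local projection is real-separable) if and only if its
tomographically-local projection is positive semidefinite, i.e. a valid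
two-rebit state. -/
theorem stmt7 (ρ : Matrix (Fin 2 × Fin 2) (Fin 2 × Fin 2) ℝ)
    (hρ : IsTwoRebitState ρ) :
    RealSeparable (PiTL ρ) ↔ (PiTL ρ).PosSemidef := by
  constructor
  · rintro ⟨n, p, A, B, hp, -, hA, hB, heq⟩
    rw [heq]
    exact posSemidef_sum _ fun k =>
      posSemidef_smul (hp k) (posSemidef_kron (hA k).2.1 (hB k).2.1)
  · intro hpsd
    obtain ⟨hsym, hρpsd, htr⟩ := hρ
    have h1 : (PiTL ρ).trace = 1 := by
      unfold PiTL
      rw [Matrix.trace_sub, Matrix.trace_smul, trace_Y4, smul_eq_mul, mul_zero, sub_zero, htr]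
    have h2 : ((PiTL ρ) * Y₄).trace = 0 := by
      unfold PiTL
      rw [Matrix.sub_mul, Matrix.smul_mul, Matrix.trace_sub, Matrix.trace_smul, trace_Y4_sq,
        smul_eq_mul]
      ring
    exact hard_direction _ hpsd h1 h2
end

section
/- Let ρ be a two-rebit state (real symmetric positive semidefinite 4×4 matrix of trace 1), and let ι(ρ) be the complex 4×4 matrix obtained by mapping the entries of ρ into ℂ. If ι(ρ) is complex-separable, then Π_TL(ρ) := ρ − (1/4)·trace(ρ * Y₄) • Y₄ is real-separable; that is, a two-rebit state whose complex embedding is separable in unrestricted complex quantum theory lacks tomographically-local entanglement. -/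
open Matrix Kronecker
open scoped ComplexOrder

/-- Complex separability: a convex combination of Kronecker products of
complex positive semidefinite trace-one 2×2 matrices. -/
def ComplexSeparable (σ : Matrix (Fin 2 × Fin 2) (Fin 2 × Fin 2) ℂ) : Prop :=
  ∃ (n : ℕ) (p : Fin n → ℝ) (A B : Fin n → Matrix (Fin 2) (Fin 2) ℂ),
    (∀ k, 0 ≤ p k) ∧ ((∑ k, p k) = 1) ∧
    (∀ k, (A k).PosSemidef ∧ (A k).trace = 1) ∧
    (∀ k, (B k).PosSemidef ∧ (B k).trace = 1) ∧
    σ = ∑ k, (p k : ℂ) • (A k ⊗ₖ B k)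

lemma herm_im (M : Matrix (Fin 2) (Fin 2) ℂ) (hM : M.IsHermitian) (i j : Fin 2) :
    (M i j).im = (M 1 0).im * y i j := by
  have h00 := congrArg Complex.im (hM.apply 0 0)
  have h10 := congrArg Complex.im (hM.apply 1 0)
  have h11 := congrArg Complex.im (hM.apply 1 1)
  simp only [Complex.star_def, Complex.conj_im] at h00 h10 h11
  fin_cases i <;> fin_cases j <;> simp [y] <;> linarith

lemma psd_re (M : Matrix (Fin 2) (Fin 2) ℂ) (hM : M.PosSemidef) :
    (Matrix.of fun i j => (M i j).re).PosSemidef := by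
  rw [Matrix.posSemidef_iff_dotProduct_mulVec]
  constructor
  · ext i j
    have := congrArg Complex.re (hM.1.apply i j)
    simp only [Complex.star_def, Complex.conj_re] at this
    simpa [Matrix.conjTranspose_apply] using this
  · intro x
    have h := hM.dotProduct_mulVec_nonneg (fun i => (x i : ℂ))
    rw [Complex.nonneg_iff] at h
    have hre := h.1
    simp only [dotProduct, Matrix.mulVec, Pi.star_apply, Complex.star_def,
      Complex.conj_ofReal, Fin.sum_univ_two, Complex.add_re, Complex.mul_re,
      Complex.ofReal_re, Complex.ofReal_im, Complex.add_im, Complex.mul_im] at hre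
    simp only [dotProduct, Matrix.mulVec, Pi.star_apply, star_trivial,
      Fin.sum_univ_two, Matrix.of_apply]
    nlinarith [hre]

lemma sym_re (M : Matrix (Fin 2) (Fin 2) ℂ) (hM : M.IsHermitian) :
    (Matrix.of fun i j => (M i j).re).IsSymm := by
  ext i j
  have := congrArg Complex.re (hM.apply i j)
  simp only [Complex.star_def, Complex.conj_re] at this
  simpa [Matrix.transpose_apply] using this

lemma trace_mul_y (S : Matrix (Fin 2) (Fin 2) ℝ) (hS : S 0 1 = S 1 0) :
    (S * y).trace = 0 := by
  simp [Matrix.trace_fin_two, Matrix.mul_apply, Fin.sum_univ_two, y, hS]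

/-- **Proposition 7, item 2 of the paper.**
If the complex embedding of a two-rebit state is separable in unrestricted
complex quantum theory, then the state lacks tomographically-local
entanglement: its tomographically-local projection is real-separable. -/
theorem stmt8 (ρ : Matrix (Fin 2 × Fin 2) (Fin 2 × Fin 2) ℝ)
    (hρ : IsTwoRebitState ρ)
    (hsep : ComplexSeparable (ρ.map (Complex.ofReal))) :
    RealSeparable (PiTL ρ) := by
  obtain ⟨n, p, A, B, hp, hpsum, hA, hB, hEq⟩ := hsep
  set RA : Fin n → Matrix (Fin 2) (Fin 2) ℝ :=
    fun k => Matrix.of fun i j => (A k i j).re with hRA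
  set RB : Fin n → Matrix (Fin 2) (Fin 2) ℝ :=
    fun k => Matrix.of fun i j => (B k i j).re with hRB
  set a : Fin n → ℝ := fun k => (A k 1 0).im with ha
  set b : Fin n → ℝ := fun k => (B k 1 0).im with hb
  set c : ℝ := ∑ k, p k * (a k * b k) with hc
  have hdecomp : ρ = (∑ k, p k • (RA k ⊗ₖ RB k)) + c • Y₄ := by
    ext i j
    obtain ⟨i1, i2⟩ := i; obtain ⟨j1, j2⟩ := j
    have h := congrArg Complex.re (congrFun (congrFun hEq (i1, i2)) (j1, j2))
    simp only [Matrix.map_apply, Complex.ofReal_re, Matrix.sum_apply] at h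
    rw [Complex.re_sum] at h
    rw [h]
    simp only [Matrix.add_apply, Matrix.smul_apply, Matrix.sum_apply, smul_eq_mul, hc,
      Finset.sum_mul]
    rw [← Finset.sum_add_distrib]
    refine Finset.sum_congr rfl fun k _ => ?_
    have hai := herm_im (A k) (hA k).1.1 i1 j1
    have hbi := herm_im (B k) (hB k).1.1 i2 j2
    simp only [Matrix.smul_apply, Matrix.kroneckerMap_apply, smul_eq_mul, Complex.mul_re,
      Complex.ofReal_re, Complex.ofReal_im, Y₄, Matrix.neg_apply, hRA, hRB, ha, hb,
      Matrix.of_apply, hai, hbi]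
    ring
  have hsymRA : ∀ k, (RA k) 0 1 = (RA k) 1 0 := by
    intro k
    have := congrArg Complex.re ((hA k).1.1.apply 0 1)
    simp only [Complex.star_def, Complex.conj_re] at this
    simpa [hRA] using this.symm
  have htr : (ρ * Y₄).trace = 4 * c := by
    rw [hdecomp, Matrix.add_mul, Matrix.trace_add, Finset.sum_mul, Matrix.trace_sum]
    have h1 : ∀ k ∈ Finset.univ, ((p k • (RA k ⊗ₖ RB k)) * Y₄).trace = 0 := by
      intro k _
      rw [Matrix.smul_mul, Matrix.trace_smul, Y₄, Matrix.mul_neg,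
        ← Matrix.mul_kronecker_mul, Matrix.trace_neg, Matrix.trace_kronecker,
        trace_mul_y (RA k) (hsymRA k)]
      simp
    rw [Finset.sum_eq_zero h1]
    have h2 : (Y₄ * Y₄).trace = 4 := by
      have hy : (y * y).trace = -2 := by
        simp [y, Matrix.trace_fin_two, Matrix.mul_apply, Fin.sum_univ_two]
        norm_num
      rw [Y₄, Matrix.neg_mul, Matrix.mul_neg, neg_neg, ← Matrix.mul_kronecker_mul,
        Matrix.trace_kronecker, hy]
      norm_num
    rw [Matrix.smul_mul, Matrix.trace_smul, h2]
    simp [mul_comm]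
  have hPi : PiTL ρ = ∑ k, p k • (RA k ⊗ₖ RB k) := by
    rw [PiTL, htr]
    have hco : (1 / 4 : ℝ) * (4 * c) = c := by ring
    rw [hco]
    conv_lhs => rw [hdecomp]
    exact add_sub_cancel_right _ _
  refine ⟨n, p, RA, RB, hp, hpsum, ?_, ?_, hPi⟩
  · intro k
    refine ⟨sym_re _ (hA k).1.1, psd_re _ (hA k).1, ?_⟩
    have := congrArg Complex.re (hA k).2
    simp only [Matrix.trace_fin_two, Complex.add_re, Complex.one_re] at this
    simpa [hRA, Matrix.trace_fin_two] using this
  · intro k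
    refine ⟨sym_re _ (hB k).1.1, psd_re _ (hB k).1, ?_⟩
    have := congrArg Complex.re (hB k).2
    simp only [Matrix.trace_fin_two, Complex.add_re, Complex.one_re] at this
    simpa [hRB, Matrix.trace_fin_two] using this
end

section
/- Suppose ω₀ and ω₁ are two-rebit states such that trace(ω₀ * (E ⊗ₖ F)) = trace(ω₁ * (E ⊗ₖ F)) for all real symmetric 2×2 matrices E and F (no product effect can distinguish them), and suppose there exists a measurement perfectly distinguishing them: real symmetric positive semidefinite 4×4 matrices e₀, e₁ with e₀ + e₁ = I₄ and trace(e_i * ω_x) = 1 if i = x and 0 otherwise (x, i ∈ {0,1}). Then ω₀ − ω₁ = c • Y₄ for some nonzero real c; in particular trace(ω₀ * Y₄) ≠ trace(ω₁ * Y₄), so at least one of ω₀, ω₁ has a nonzero Y₄ component, i.e., carries tomographically-nonlocal entanglement. -/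
open Matrix Kronecker

lemma symA : (!![(1:ℝ),0;0,0]).IsSymm := by
  ext i j; fin_cases i <;> fin_cases j <;> simp [Matrix.IsSymm]
lemma symB : (!![(0:ℝ),0;0,1]).IsSymm := by
  ext i j; fin_cases i <;> fin_cases j <;> simp [Matrix.IsSymm]
lemma symS : (!![(0:ℝ),1;1,0]).IsSymm := by
  ext i j; fin_cases i <;> fin_cases j <;> simp [Matrix.IsSymm]

lemma keylem (Δ : Matrix (Fin 2 × Fin 2) (Fin 2 × Fin 2) ℝ) (hsym : Δ.IsSymm)
    (hkey : ∀ E F : Matrix (Fin 2) (Fin 2) ℝ, E.IsSymm → F.IsSymm →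
      (Δ * (E ⊗ₖ F)).trace = 0) :
    Δ = (Δ (0,1) (1,0)) • Y₄ := by
  have hs : ∀ p q, Δ q p = Δ p q := fun p q => congrFun (congrFun hsym p) q
  have h1 := hkey _ _ symA symA
  have h2 := hkey _ _ symA symB
  have h3 := hkey _ _ symA symS
  have h4 := hkey _ _ symB symA
  have h5 := hkey _ _ symB symB
  have h6 := hkey _ _ symB symS
  have h7 := hkey _ _ symS symA
  have h8 := hkey _ _ symS symB
  have h9 := hkey _ _ symS symS
  simp [Matrix.trace, Matrix.mul_apply, Fintype.sum_prod_type, Fin.sum_univ_two,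
    Matrix.kroneckerMap_apply, ← Prod.mk_zero_zero, ← Prod.mk_one_one] at h1 h2 h3 h4 h5 h6 h7 h8 h9
  ext ⟨a,b⟩ ⟨c,d⟩
  have s1 := hs (0,0) (0,1); have s2 := hs (0,0) (1,0); have s3 := hs (0,0) (1,1)
  have s4 := hs (0,1) (1,0); have s5 := hs (0,1) (1,1); have s6 := hs (1,0) (1,1)
  fin_cases a <;> fin_cases b <;> fin_cases c <;> fin_cases d <;>
    simp [Y₄, y, ← Prod.mk_zero_zero, ← Prod.mk_one_one] <;> linarith

/-- **Proposition 12 of the paper (in real quantum theory):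
perfectly secure data hiding requires tomographically-nonlocal entanglement.**
If no product effect can distinguish two-rebit states ω₀, ω₁ while some joint
two-outcome measurement distinguishes them perfectly, then ω₀ − ω₁ is a nonzero
multiple of σ_y ⊗ σ_y; in particular the two states differ in their
σ_y ⊗ σ_y component, so at least one of them carries tomographically-nonlocal
entanglement. -/
theorem stmt14 (ω₀ ω₁ : Matrix (Fin 2 × Fin 2) (Fin 2 × Fin 2) ℝ)
    (h₀ : IsTwoRebitState ω₀) (h₁ : IsTwoRebitState ω₁)
    (hprod : ∀ E F : Matrix (Fin 2) (Fin 2) ℝ, E.IsSymm → F.IsSymm →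
      (ω₀ * (E ⊗ₖ F)).trace = (ω₁ * (E ⊗ₖ F)).trace)
    (e₀ e₁ : Matrix (Fin 2 × Fin 2) (Fin 2 × Fin 2) ℝ)
    (he₀s : e₀.IsSymm) (he₀ : e₀.PosSemidef)
    (he₁s : e₁.IsSymm) (he₁ : e₁.PosSemidef)
    (hsum : e₀ + e₁ = 1)
    (hd₀₀ : (e₀ * ω₀).trace = 1) (hd₁₀ : (e₁ * ω₀).trace = 0)
    (hd₀₁ : (e₀ * ω₁).trace = 0) (hd₁₁ : (e₁ * ω₁).trace = 1) :
    (∃ c : ℝ, c ≠ 0 ∧ ω₀ - ω₁ = c • Y₄) ∧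
      (ω₀ * Y₄).trace ≠ (ω₁ * Y₄).trace := by
  have hΔs : (ω₀ - ω₁).IsSymm := h₀.1.sub h₁.1
  have hkey : ∀ E F : Matrix (Fin 2) (Fin 2) ℝ, E.IsSymm → F.IsSymm →
      ((ω₀ - ω₁) * (E ⊗ₖ F)).trace = 0 := by
    intro E F hE hF
    rw [Matrix.sub_mul, Matrix.trace_sub, hprod E F hE hF, sub_self]
  have hmain := keylem _ hΔs hkey
  set c := (ω₀ - ω₁) (0,1) (1,0) with hcdef
  have hc : c ≠ 0 := by
    intro h
    have htr : (e₀ * (ω₀ - ω₁)).trace = 1 := by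
      rw [Matrix.mul_sub, Matrix.trace_sub, hd₀₀, hd₀₁]; ring
    rw [hmain, h, zero_smul] at htr
    simp at htr
  refine ⟨⟨c, hc, hmain⟩, ?_⟩
  intro h
  have htr : ((ω₀ - ω₁) * Y₄).trace = 0 := by
    rw [Matrix.sub_mul, Matrix.trace_sub, h, sub_self]
  rw [hmain, Matrix.smul_mul, Matrix.trace_smul, smul_eq_mul] at htr
  have hY : (Y₄ * Y₄).trace = 4 := by
    simp [Y₄, y, Matrix.trace, Matrix.mul_apply, Fintype.sum_prod_type, Fin.sum_univ_two,
      Matrix.kroneckerMap_apply]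
    norm_num
  rw [hY] at htr
  exact hc (by linarith)
end
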